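/- The gauge matrix S(λ; θ, ω) diagonalizes the boundary matrix K₋: S⁻¹(λ; δ−ζ, τ) K₋(λ; δ, ζ, τ) S(−λ; δ−ζ, τ) equals the diagonal matrix diag( sinh(δ−λ)/sinh(δ+λ), sinh(ζ−λ)/sinh(ζ+λ) ). -/

import Mathlib

open Matrix Complex

noncomputable def Kmat (δ ζ τ lam : ℂ) : Matrix (Fin 2) (Fin 2) ℂ :=
  !![(Complex.cosh (δ + ζ) * Complex.exp (-lam) - Complex.cosh (δ - ζ) * Complex.exp lam) /
        (2 * Complex.sinh (δ + lam) * Complex.sinh (lam + ζ)),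
     Complex.exp (-τ) * Complex.sinh (2 * lam) /
        (2 * Complex.sinh (δ + lam) * Complex.sinh (lam + ζ));
     -(Complex.exp τ) * Complex.sinh (2 * lam) /
        (2 * Complex.sinh (δ + lam) * Complex.sinh (lam + ζ)),
     (Complex.cosh (δ + ζ) * Complex.exp lam - Complex.cosh (δ - ζ) * Complex.exp (-lam)) /
        (2 * Complex.sinh (δ + lam) * Complex.sinh (lam + ζ))]

noncomputable def Smat (θ ω lam : ℂ) : Matrix (Fin 2) (Fin 2) ℂ :=
  Complex.exp (lam / 2) •
    !![Complex.exp (-(lam + θ + ω)), Complex.exp (-(lam - θ + ω)); 1, 1]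

set_option maxHeartbeats 4000000 in
theorem gauge_diagonalizes_Kminus (δ ζ τ lm : ℂ)
    (h1 : Complex.sinh (δ + lm) ≠ 0) (h2 : Complex.sinh (lm + ζ) ≠ 0)
    (h3 : Complex.sinh (δ - ζ) ≠ 0) :
    (Smat (δ - ζ) τ lm)⁻¹ * Kmat δ ζ τ lm * Smat (δ - ζ) τ (-lm) =
      !![Complex.sinh (δ - lm) / Complex.sinh (δ + lm), 0;
         0, Complex.sinh (ζ - lm) / Complex.sinh (ζ + lm)] := by
  have hdet : IsUnit (Smat (δ - ζ) τ lm).det := by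
    simp only [Smat, Matrix.det_smul, Matrix.det_fin_two_of, Fintype.card_fin]
    have : Complex.exp (-(lm + (δ - ζ) + τ)) * 1 - Complex.exp (-(lm - (δ - ζ) + τ)) * 1
        = Complex.exp (-lm - τ) * (-2 * Complex.sinh (δ - ζ)) := by
      rw [Complex.sinh, show -(lm + (δ - ζ) + τ) = (-lm - τ) + -(δ - ζ) by ring,
          show -(lm - (δ - ζ) + τ) = (-lm - τ) + (δ - ζ) by ring,
          Complex.exp_add, Complex.exp_add]
      ring
    rw [this]
    simp [Complex.exp_ne_zero, h3, isUnit_iff_ne_zero, sub_eq_zero]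
  have h2' : Complex.sinh (ζ + lm) ≠ 0 := by rwa [add_comm] at h2
  have hc : (2 * Complex.sinh (δ + lm) * Complex.sinh (lm + ζ)) ≠ 0 := by
    simp [h1, h2]
  have key' : (2 * Complex.sinh (δ + lm) * Complex.sinh (lm + ζ)) •
        (Kmat δ ζ τ lm * Smat (δ - ζ) τ (-lm)) =
      (2 * Complex.sinh (δ + lm) * Complex.sinh (lm + ζ)) •
        (Smat (δ - ζ) τ lm *
          !![Complex.sinh (δ - lm) / Complex.sinh (δ + lm), 0;
             0, Complex.sinh (ζ - lm) / Complex.sinh (ζ + lm)]) := by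
    ext i j
    fin_cases i <;> fin_cases j <;>
      · simp only [Kmat, Smat, Matrix.mul_apply, Fin.sum_univ_succ, Fin.sum_univ_zero,
          Matrix.smul_apply, Matrix.cons_val', Matrix.cons_val_zero, Matrix.cons_val_one,
          Matrix.head_cons, Matrix.head_fin_const, Matrix.empty_val', Matrix.cons_val_fin_one,
          smul_eq_mul, add_zero, mul_zero, mul_one, zero_add, Matrix.of_apply, Fin.zero_eta,
          Fin.mk_one, Matrix.cons_val_succ, Fin.succ_zero_eq_one]
        field_simp [h1, h2, h2']
        simp only [Complex.sinh, Complex.cosh]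
        field_simp
        ring_nf
        simp only [← Complex.exp_add, ← Complex.exp_nat_mul]
        ring_nf
  have key := smul_right_injective (Matrix (Fin 2) (Fin 2) ℂ) hc key'
  rw [Matrix.mul_assoc, key, ← Matrix.mul_assoc,
    Matrix.nonsing_inv_mul _ hdet, Matrix.one_mul]
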